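/- The Lie algebra $\mathfrak{g}$ with basis $e_1,\dots,e_{10}$ and nonzero brackets $[e_1,e_i]=e_{i+1}$ ($2\le i\le 9$), $[e_2,e_6]=e_{10}$, $[e_2,e_5]=e_9$, $[e_2,e_4]=e_8$, $[e_2,e_3]=e_7$ admits no symplectic structure: every closed 2-form on $\mathfrak{g}$ is degenerate. -/

import Mathlib

/-- Structure constants (zero-based basis `e₁, …, e₁₀`) of the 10-dimensional
Lie algebra with nonzero brackets `[e₁, eᵢ] = e_{i+1}` (`2 ≤ i ≤ 9`),
`[e₂,e₃] = e₇`, `[e₂,e₄] = e₈`, `[e₂,e₅] = e₉`, `[e₂,e₆] = e₁₀`. -/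
def gc18 (K : Type*) [Field K] (i j l : Fin 10) : K :=
  ((if i.val = 0 ∧ 1 ≤ j.val ∧ l.val = j.val + 1 then 1 else 0)
    + (if i.val = 1 ∧ 2 ≤ j.val ∧ j.val ≤ 5 ∧ l.val = j.val + 4 then 1 else 0))
  - ((if j.val = 0 ∧ 1 ≤ i.val ∧ l.val = i.val + 1 then 1 else 0)
    + (if j.val = 1 ∧ 2 ≤ i.val ∧ i.val ≤ 5 ∧ l.val = i.val + 4 then 1 else 0))

/-- Chevalley–Eilenberg closedness for a 2-form given by its matrix. -/
def gc18Closed (K : Type*) [Field K] (a : Fin 10 → Fin 10 → K) : Prop :=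
  ∀ i j l : Fin 10,
    (∑ m, gc18 K i j m * a m l) + (∑ m, gc18 K j l m * a m i)
      + (∑ m, gc18 K l i m * a m j) = 0

theorem sum10aux {M : Type*} [AddCommMonoid M] (f : Fin 10 → M) :
    ∑ i, f i = f 0 + f 1 + f 2 + f 3 + f 4 + f 5 + f 6 + f 7 + f 8 + f 9 := by
  simp [Fin.sum_univ_succ, ← add_assoc]

/-- The 10-dimensional Lie algebra with nonzero brackets
`[e₁,eᵢ] = e_{i+1}` (`2 ≤ i ≤ 9`), `[e₂,e₆] = e₁₀`, `[e₂,e₅] = e₉`,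
`[e₂,e₄] = e₈`, `[e₂,e₃] = e₇` admits no symplectic structure: every closed
antisymmetric 2-form is degenerate. -/
theorem stmt18 (K : Type*) [Field K] [CharZero K] :
    ∀ a : Fin 10 → Fin 10 → K,
      (∀ i j, a i j = - a j i) → gc18Closed K a →
      ∃ v : Fin 10 → K, v ≠ 0 ∧ ∀ j, ∑ i, v i * a i j = 0 := by
  intro a hs hcl
  have h016 := hcl 0 1 6
  have h017 := hcl 0 1 7
  have h019 := hcl 0 1 9
  have h025 := hcl 0 2 5
  have h026 := hcl 0 2 6
  have h027 := hcl 0 2 7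
  have h028 := hcl 0 2 8
  have h034 := hcl 0 3 4
  have h038 := hcl 0 3 8
  have h045 := hcl 0 4 5
  have h056 := hcl 0 5 6
  have h057 := hcl 0 5 7
  have h067 := hcl 0 6 7
  have h069 := hcl 0 6 9
  have h078 := hcl 0 7 8
  have h123 := hcl 1 2 3
  have h124 := hcl 1 2 4
  have h126 := hcl 1 2 6
  have h127 := hcl 1 2 7
  have h134 := hcl 1 3 4
  have h135 := hcl 1 3 5
  have h136 := hcl 1 3 6
  have h138 := hcl 1 3 8
  have h146 := hcl 1 4 6
  have h147 := hcl 1 4 7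
  have h149 := hcl 1 4 9
  have h157 := hcl 1 5 7
  simp (config := { decide := true }) only [sum10aux, gc18] at h016 h017 h019 h025 h026 h027 h028 h034 h038 h045 h056 h057 h067 h069 h078 h123 h124 h126 h127 h134 h135 h136 h138 h146 h147 h149 h157
  norm_num at h016 h017 h019 h025 h026 h027 h028 h034 h038 h045 h056 h057 h067 h069 h078 h123 h124 h126 h127 h134 h135 h136 h138 h146 h147 h149 h157
  have z71 : a 7 1 = 0 := by linear_combination (-1 : K) * h016 + h025 + (-1 : K) * h034 + hs 2 6 + (-1 : K) * hs 3 5 + (1/2 : K) * hs 4 4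
  have z72 : a 7 2 = 0 := by linear_combination (-1/2 : K) * h026 + (-1/2 : K) * h123 + (1/2 : K) * hs 3 6
  have z73 : a 7 3 = 0 := by linear_combination (-1 : K) * h027 + h045 + h124 + hs 3 7 + (-1/2 : K) * hs 5 5
  have z74 : a 7 4 = 0 := by linear_combination h019 + (-1 : K) * h028 + h134 + (-1 : K) * hs 2 9 + hs 3 8
  have z75 : a 7 5 = 0 := by linear_combination (-1 : K) * h056 + h126
  have z76 : a 7 6 = 0 := by linear_combination h136
  have z77 : a 7 7 = 0 := by linear_combination h067 + h146
  have z78 : a 7 8 = 0 := by linear_combination h138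
  have z79 : a 7 9 = 0 := by linear_combination h069
  have z81 : a 8 1 = 0 := by linear_combination (-1 : K) * h017 + (1/2 : K) * h026 + (1/2 : K) * h123 + hs 2 7 + (-1/2 : K) * hs 3 6
  have z82 : a 8 2 = 0 := by linear_combination (-1 : K) * h045 + (-1 : K) * h124 + (1/2 : K) * hs 5 5
  have z83 : a 8 3 = 0 := by linear_combination h019 + (-1 : K) * h028 + (-1 : K) * hs 2 9 + hs 3 8
  have z84 : a 8 4 = 0 := by linear_combination (-1 : K) * h038 + h056 + (-1 : K) * h126 + h135 + hs 4 8
  have z85 : a 8 5 = 0 := by linear_combination (-1 : K) * h057 + h127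
  have z86 : a 8 6 = 0 := by linear_combination h146
  have z87 : a 8 7 = 0 := by linear_combination h147
  have z88 : a 8 8 = 0 := by linear_combination h078 + h157
  have z89 : a 8 9 = 0 := by linear_combination h149
  have k7 : ∀ j : Fin 10, j ≠ 0 → a 7 j = 0 := by
    intro j hj
    fin_cases j
    · exact absurd rfl hj
    · exact z71
    · exact z72
    · exact z73
    · exact z74
    · exact z75
    · exact z76
    · exact z77
    · exact z78
    · exact z79
  have k8 : ∀ j : Fin 10, j ≠ 0 → a 8 j = 0 := by
    intro j hj
    fin_cases j
    · exact absurd rfl hj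
    · exact z81
    · exact z82
    · exact z83
    · exact z84
    · exact z85
    · exact z86
    · exact z87
    · exact z88
    · exact z89
  by_cases h70 : a 7 0 = 0
  · refine ⟨fun i => if i = 7 then 1 else 0, ?_, ?_⟩
    · intro h
      have := congrFun h 7
      norm_num at this
    · intro j
      rw [sum10aux]
      simp (config := { decide := true }) only [if_true, if_false, reduceIte,
        zero_mul, one_mul, zero_add, add_zero]
      by_cases hj : j = 0
      · rw [hj]; exact h70
      · exact k7 j hj
  · refine ⟨fun i => if i = 8 then a 7 0 else if i = 7 then -(a 8 0) else 0, ?_, ?_⟩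
    · intro h
      have := congrFun h 8
      norm_num at this
      exact h70 this
    · intro j
      rw [sum10aux]
      simp (config := { decide := true }) only [if_true, if_false, reduceIte,
        zero_mul, one_mul, zero_add, add_zero]
      by_cases hj : j = 0
      · rw [hj]; ring
      · rw [k7 j hj, k8 j hj]; ring
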